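/- For the two-user Gaussian MAC with SNRs γ_1, γ_2 > 0, define for C ≥ 0 and α ∈ [0, 1/2] the function L_α(C) = (α/2) log(1 + 2ρ_0 √(γ_1 γ_2)/(1+γ_1+γ_2)) + ((1−2α)/2) log(1 − ρ_0² γ_2/(1+γ_2)) − C, where ρ_0 = sqrt(1 − 2^{−4C}). Then as C → 0⁺, L_α(C) = α · (2 √(γ_1 γ_2 · log e)/(1+γ_1+γ_2)) · √C + o(√C). In particular for α ∈ (0, 1/2], L_α(C)/√C → α · 2√(γ_1 γ_2 log e)/(1+γ_1+γ_2) > 0, so the right derivative of L_α at 0 is +∞. -/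

import Mathlib

open Filter

/-- The correlation coefficient `ρ₀(C) = √(1 - 2^{-4C})`. -/
noncomputable def rho0 (C : ℝ) : ℝ := Real.sqrt (1 - (2 : ℝ) ^ (-(4 * C)))

/-- The achievable weighted-sum-rate gain for the two-user Gaussian MAC:
`L_α(C) = (α/2) log(1 + 2ρ₀√(γ₁γ₂)/(1+γ₁+γ₂))
          + ((1-2α)/2) log(1 - ρ₀² γ₂/(1+γ₂)) - C` (base-2 logarithms). -/
noncomputable def Lgain (γ₁ γ₂ α C : ℝ) : ℝ :=
  (α / 2) * Real.logb 2 (1 + 2 * rho0 C * Real.sqrt (γ₁ * γ₂) / (1 + γ₁ + γ₂)) +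
    ((1 - 2 * α) / 2) * Real.logb 2 (1 - (rho0 C) ^ 2 * γ₂ / (1 + γ₂)) - C

lemma slope_lim {f : ℝ → ℝ} {d : ℝ} (h : HasDerivAt f d 0) (h0 : f 0 = 0) :
    Tendsto (fun x => f x / x) (nhdsWithin 0 (Set.Ioi 0)) (nhds d) := by
  have h1 := hasDerivAt_iff_tendsto_slope.mp h
  have h2 : Tendsto (slope f 0) (nhdsWithin 0 (Set.Ioi 0)) (nhds d) :=
    h1.mono_left (nhdsWithin_mono _ fun x hx => ne_of_gt hx)
  refine h2.congr fun x => ?_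
  simp [slope_def_field, h0]

lemma pow_eq' (C : ℝ) : (2:ℝ) ^ (-(4*C)) = Real.exp (Real.log 2 * (-(4*C))) := by
  rw [Real.rpow_def_of_pos two_pos]

lemma hA' : HasDerivAt (fun C : ℝ => 1 - (2:ℝ) ^ (-(4*C))) (4 * Real.log 2) 0 := by
  have hlin : HasDerivAt (fun C : ℝ => Real.log 2 * (-(4*C))) (Real.log 2 * (-4)) 0 := by
    simpa using (((hasDerivAt_id (0:ℝ)).const_mul (4:ℝ)).neg.const_mul (Real.log 2))
  have he := hlin.exp
  have he2 : HasDerivAt (fun C : ℝ => Real.exp (Real.log 2 * (-(4*C)))) (-(4 * Real.log 2)) 0 := by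
    simpa [mul_comm] using he
  have := he2.const_sub 1
  simpa [pow_eq'] using this

lemma fA : Tendsto (fun C : ℝ => (1 - (2:ℝ) ^ (-(4*C))) / C) (nhdsWithin 0 (Set.Ioi 0))
    (nhds (4 * Real.log 2)) := slope_lim hA' (by simp)

lemma rho0_pos {C : ℝ} (hC : 0 < C) : 0 < rho0 C := by
  apply Real.sqrt_pos.mpr
  have : (2:ℝ) ^ (-(4*C)) < 1 := Real.rpow_lt_one_of_one_lt_of_neg one_lt_two (by linarith)
  linarith

lemma rho0_sq {C : ℝ} (hC : 0 < C) : rho0 C ^ 2 = 1 - (2:ℝ) ^ (-(4*C)) := by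
  apply Real.sq_sqrt
  have : (2:ℝ) ^ (-(4*C)) ≤ 1 := Real.rpow_le_one_of_one_le_of_nonpos one_le_two (by linarith)
  linarith

lemma rho0_lim : Tendsto rho0 (nhdsWithin 0 (Set.Ioi 0)) (nhdsWithin 0 (Set.Ioi 0)) := by
  rw [tendsto_nhdsWithin_iff]
  constructor
  · have hc : Continuous rho0 := by
      unfold rho0
      simp only [pow_eq']
      continuity
    have : Tendsto rho0 (nhdsWithin 0 (Set.Ioi 0)) (nhds (rho0 0)) :=
      (hc.tendsto 0).mono_left nhdsWithin_le_nhds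
    simpa [rho0] using this
  · exact eventually_nhdsWithin_of_forall fun x hx => rho0_pos hx

lemma sqrt_tendsto0 : Tendsto (fun C : ℝ => Real.sqrt C) (nhdsWithin 0 (Set.Ioi 0)) (nhds 0) := by
  have : Tendsto (fun C : ℝ => Real.sqrt C) (nhds 0) (nhds (Real.sqrt 0)) :=
    Real.continuous_sqrt.tendsto 0
  simpa using this.mono_left nhdsWithin_le_nhds

lemma logb_deriv (k : ℝ) : HasDerivAt (fun r : ℝ => Real.logb 2 (1 + k * r)) (k / Real.log 2) 0 := by
  have hlin : HasDerivAt (fun r : ℝ => 1 + k * r) k 0 := by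
    simpa using ((hasDerivAt_id (0:ℝ)).const_mul k).const_add 1
  have hlog : HasDerivAt (fun r : ℝ => Real.log (1 + k * r)) k 0 := by
    have := hlin.log (by norm_num)
    simpa using this
  have := hlog.div_const (Real.log 2)
  simpa [Real.logb] using this

lemma logb_deriv_neg (m : ℝ) :
    HasDerivAt (fun s : ℝ => Real.logb 2 (1 - m * s)) (-m / Real.log 2) 0 := by
  have hlin : HasDerivAt (fun s : ℝ => 1 - m * s) (-m) 0 := by
    simpa using ((hasDerivAt_id (0:ℝ)).const_mul m).const_sub 1
  have hlog : HasDerivAt (fun s : ℝ => Real.log (1 - m * s)) (-m) 0 := by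
    have := hlin.log (by norm_num)
    simpa using this
  have := hlog.div_const (Real.log 2)
  simpa [Real.logb] using this

lemma rho_over_sqrt :
    Tendsto (fun C : ℝ => rho0 C / Real.sqrt C) (nhdsWithin 0 (Set.Ioi 0))
      (nhds (2 * Real.sqrt (Real.log 2))) := by
  have h2 : Real.sqrt (4 * Real.log 2) = 2 * Real.sqrt (Real.log 2) := by
    rw [show (4:ℝ) * Real.log 2 = 2^2 * Real.log 2 by norm_num,
      Real.sqrt_mul (by positivity), Real.sqrt_sq (by norm_num)]
  have hc : Tendsto (fun x : ℝ => Real.sqrt x) (nhds (4 * Real.log 2))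
      (nhds (2 * Real.sqrt (Real.log 2))) := by
    rw [← h2]; exact Real.continuous_sqrt.tendsto _
  have := hc.comp fA
  refine this.congr' ?_
  filter_upwards [self_mem_nhdsWithin] with C hC
  have hC' : (0:ℝ) < C := hC
  have hnn : (0:ℝ) ≤ 1 - (2:ℝ) ^ (-(4*C)) := by
    have : (2:ℝ) ^ (-(4*C)) ≤ 1 := Real.rpow_le_one_of_one_le_of_nonpos one_le_two (by linarith)
    linarith
  simp only [Function.comp, rho0]
  rw [Real.sqrt_div hnn]

theorem Lgain_sqrt_asymptotics (γ₁ γ₂ : ℝ) (hγ₁ : 0 < γ₁) (hγ₂ : 0 < γ₂)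
    (α : ℝ) (hα : α ∈ Set.Icc (0 : ℝ) (1 / 2)) :
    Tendsto (fun C : ℝ => Lgain γ₁ γ₂ α C / Real.sqrt C)
        (nhdsWithin 0 (Set.Ioi 0))
        (nhds (α * (2 * Real.sqrt (γ₁ * γ₂ * (Real.log 2)⁻¹) / (1 + γ₁ + γ₂)))) ∧
      (0 < α →
        0 < α * (2 * Real.sqrt (γ₁ * γ₂ * (Real.log 2)⁻¹) / (1 + γ₁ + γ₂))) := by
  have hL : (0:ℝ) < Real.log 2 := Real.log_pos one_lt_two
  have hden : (0:ℝ) < 1 + γ₁ + γ₂ := by linarith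
  have hden2 : (0:ℝ) < 1 + γ₂ := by linarith
  set k : ℝ := 2 * Real.sqrt (γ₁ * γ₂) / (1 + γ₁ + γ₂) with hk
  set m : ℝ := γ₂ / (1 + γ₂) with hm
  constructor
  · -- main limit
    -- first term
    have H1 : Tendsto (fun C : ℝ => Real.logb 2 (1 + k * rho0 C) / rho0 C)
        (nhdsWithin 0 (Set.Ioi 0)) (nhds (k / Real.log 2)) :=
      (slope_lim (logb_deriv k) (by simp)).comp rho0_lim
    have P1 := H1.mul rho_over_sqrt
    -- second term
    have B2 : Tendsto (fun C : ℝ => rho0 C ^ 2) (nhdsWithin 0 (Set.Ioi 0))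
        (nhdsWithin 0 (Set.Ioi 0)) := by
      rw [tendsto_nhdsWithin_iff]
      constructor
      · have := ((rho0_lim.mono_right nhdsWithin_le_nhds).pow 2)
        simpa using this
      · exact eventually_nhdsWithin_of_forall fun x hx => pow_pos (rho0_pos hx) 2
    have H2 : Tendsto (fun C : ℝ => Real.logb 2 (1 - m * rho0 C ^ 2) / rho0 C ^ 2)
        (nhdsWithin 0 (Set.Ioi 0)) (nhds (-m / Real.log 2)) :=
      (slope_lim (logb_deriv_neg m) (by simp)).comp B2
    have Q : Tendsto (fun C : ℝ => rho0 C ^ 2 / Real.sqrt C) (nhdsWithin 0 (Set.Ioi 0))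
        (nhds 0) := by
      have := fA.mul sqrt_tendsto0
      rw [show (4 * Real.log 2 * 0 : ℝ) = 0 by ring] at this
      refine this.congr' ?_
      filter_upwards [self_mem_nhdsWithin] with C hC
      have hC' : (0:ℝ) < C := hC
      have hCs : Real.sqrt C * Real.sqrt C = C := Real.mul_self_sqrt hC'.le
      rw [rho0_sq hC']
      have hs : Real.sqrt C ≠ 0 := by positivity
      rw [eq_div_iff hs, mul_assoc, hCs, div_mul_cancel₀ _ hC'.ne']
    have P2 := H2.mul Q
    rw [mul_zero] at P2
    -- third term
    have ST : Tendsto (fun C : ℝ => C / Real.sqrt C) (nhdsWithin 0 (Set.Ioi 0)) (nhds 0) := by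
      refine sqrt_tendsto0.congr' ?_
      filter_upwards [self_mem_nhdsWithin] with C hC
      have hC' : (0:ℝ) < C := hC
      rw [eq_comm, div_eq_iff (by positivity), Real.mul_self_sqrt hC'.le]
    have final := ((P1.const_mul (α/2)).add (P2.const_mul ((1-2*α)/2))).sub ST
    have hval : (α/2) * (k / Real.log 2 * (2 * Real.sqrt (Real.log 2))) + ((1-2*α)/2) * 0 - 0
        = α * (2 * Real.sqrt (γ₁ * γ₂ * (Real.log 2)⁻¹) / (1 + γ₁ + γ₂)) := by
      rw [Real.sqrt_mul (by positivity), Real.sqrt_inv]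
      have hsL : Real.sqrt (Real.log 2) * Real.sqrt (Real.log 2) = Real.log 2 :=
        Real.mul_self_sqrt hL.le
      have hsLne : Real.sqrt (Real.log 2) ≠ 0 := by positivity
      rw [hk]
      field_simp
      ring_nf
      rw [Real.sq_sqrt hL.le]
      ring
    rw [hval] at final
    refine final.congr' ?_
    filter_upwards [self_mem_nhdsWithin] with C hC
    have hC' : (0:ℝ) < C := hC
    have hr : rho0 C ≠ 0 := (rho0_pos hC').ne'
    have hs : Real.sqrt C ≠ 0 := by positivity
    have hCs : Real.sqrt C * Real.sqrt C = C := Real.mul_self_sqrt hC'.le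
    have e1 : 1 + k * rho0 C = 1 + 2 * rho0 C * Real.sqrt (γ₁ * γ₂) / (1 + γ₁ + γ₂) := by
      rw [hk]; ring
    have e2 : 1 - m * rho0 C ^ 2 = 1 - rho0 C ^ 2 * γ₂ / (1 + γ₂) := by
      rw [hm]; ring
    simp only [Lgain, ← e1, ← e2]
    field_simp
  · intro hα0
    have hsq : 0 < Real.sqrt (γ₁ * γ₂ * (Real.log 2)⁻¹) :=
      Real.sqrt_pos.mpr (by positivity)
    positivity
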